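/- Let d ≥ 2 and let Φ_d be the matrix indexed by Fin d × Fin d whose entry at row (a,b), column (c,e) is 1 if a = b and c = e, and 0 otherwise. Let C_NOT := (d/(d²−1))·(I_{d²} − Φ_d/d) be the Choi matrix of the universal NOT channel. For a real number p ≥ 0, there exists a density matrix ρ₀ on Fin d such that (ρ₀ ⊗ I_d) − p·C_NOT is positive semidefinite if and only if p ≤ 1 − 1/d². (The maximum probability of simulating the universal NOT channel from the future to the past is 1 − 1/d².) -/

import Mathlib

open Matrix
open scoped Kronecker ComplexOrder

/-- The projector onto the unnormalized maximally entangled vector. -/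
noncomputable def PhiMax (d : ℕ) : Matrix (Fin d × Fin d) (Fin d × Fin d) ℂ :=
  Matrix.of fun p q => if p.1 = p.2 ∧ q.1 = q.2 then 1 else 0

/-- The Choi matrix of the universal NOT channel. -/
noncomputable def CUNOT (d : ℕ) : Matrix (Fin d × Fin d) (Fin d × Fin d) ℂ :=
  ((d : ℂ) / ((d : ℂ) ^ 2 - 1)) •
    ((1 : Matrix (Fin d × Fin d) (Fin d × Fin d) ℂ) - (1 / (d : ℂ)) • PhiMax d)

lemma psd_diag_nonneg {n : Type*} [Fintype n] [DecidableEq n]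
    {M : Matrix n n ℂ} (h : M.PosSemidef) (i : n) : 0 ≤ M i i := by
  have := h.dotProduct_mulVec_nonneg (Pi.single i 1)
  simpa [dotProduct, mulVec, Pi.single_apply, Finset.sum_ite_eq] using this

lemma psd_real_smul {n : Type*} [Fintype n] [DecidableEq n]
    {M : Matrix n n ℂ} (h : M.PosSemidef) {r : ℝ} (hr : 0 ≤ r) :
    ((r : ℂ) • M).PosSemidef := by
  refine PosSemidef.of_dotProduct_mulVec_nonneg ?_ ?_
  · unfold Matrix.IsHermitian
    rw [conjTranspose_smul, h.1]
    simp [Complex.star_def, Complex.conj_ofReal]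
  · intro x
    rw [smul_mulVec, dotProduct_smul]
    exact mul_nonneg (by exact_mod_cast hr) (h.dotProduct_mulVec_nonneg x)

lemma phiMax_posSemidef (d : ℕ) : (PhiMax d).PosSemidef := by
  have : PhiMax d = (Matrix.of (fun (_ : Unit) (q : Fin d × Fin d) =>
      if q.1 = q.2 then (1:ℂ) else 0))ᴴ * (Matrix.of (fun (_ : Unit) (q : Fin d × Fin d) =>
      if q.1 = q.2 then (1:ℂ) else 0)) := by
    ext p q
    simp [PhiMax, Matrix.mul_apply, conjTranspose_apply]
    by_cases h1 : p.1 = p.2 <;> by_cases h2 : q.1 = q.2 <;> simp [h1, h2]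
  rw [this]
  exact posSemidef_conjTranspose_mul_self _


/-- The maximum probability of simulating the universal NOT channel from the future to
the past is 1 - 1/d². -/
theorem unot_channel_sim_prob (d : ℕ) (hd : 2 ≤ d) (p : ℝ) (hp : 0 ≤ p) :
    (∃ ρ₀ : Matrix (Fin d) (Fin d) ℂ, ρ₀.PosSemidef ∧ ρ₀.trace = 1 ∧
        (ρ₀ ⊗ₖ (1 : Matrix (Fin d) (Fin d) ℂ) - (p : ℂ) • CUNOT d).PosSemidef)
      ↔ p ≤ 1 - 1 / (d : ℝ) ^ 2 := by
  have hd0 : (0:ℝ) < d := by positivity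
  have hdR : (2:ℝ) ≤ (d:ℝ) := by exact_mod_cast hd
  have hden : (0:ℝ) < (d:ℝ)^2 - 1 := by nlinarith
  have hdC : ((d:ℂ)^2 - 1) ≠ 0 := by
    have := ne_of_gt hden
    exact_mod_cast this
  have hdCne : (d:ℂ) ≠ 0 := Nat.cast_ne_zero.mpr (by omega)
  constructor
  · rintro ⟨ρ₀, hρ, htr, hM⟩
    -- for each a, pick b ≠ a
    have key : ∀ a : Fin d, 0 ≤ ρ₀ a a - (p:ℂ) * ((d:ℂ) / ((d:ℂ)^2 - 1)) := by
      intro a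
      have h01 : (0:ℕ) < d := by omega
      have h11 : (1:ℕ) < d := by omega
      set b : Fin d := if a = ⟨0, h01⟩ then ⟨1, h11⟩ else ⟨0, h01⟩ with hb
      have hab : a ≠ b := by
        by_cases h : a = ⟨0, h01⟩ <;> simp [hb, h]
      have := psd_diag_nonneg hM (a, b)
      have hentry : (ρ₀ ⊗ₖ (1 : Matrix (Fin d) (Fin d) ℂ) - (p : ℂ) • CUNOT d) (a,b) (a,b)
          = ρ₀ a a - (p:ℂ) * ((d:ℂ) / ((d:ℂ)^2 - 1)) := by
        simp [CUNOT, PhiMax, Matrix.sub_apply, Matrix.smul_apply, kroneckerMap_apply,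
          Matrix.one_apply, hab, smul_eq_mul]
      rwa [hentry] at this
    have hsum : (0:ℂ) ≤ ∑ a : Fin d, (ρ₀ a a - (p:ℂ) * ((d:ℂ) / ((d:ℂ)^2 - 1))) :=
      Finset.sum_nonneg fun a _ => key a
    have hsum2 : ∑ a : Fin d, (ρ₀ a a - (p:ℂ) * ((d:ℂ) / ((d:ℂ)^2 - 1)))
        = 1 - (d:ℂ) * ((p:ℂ) * ((d:ℂ) / ((d:ℂ)^2 - 1))) := by
      rw [Finset.sum_sub_distrib]
      have : ∑ a : Fin d, ρ₀ a a = ρ₀.trace := rfl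
      rw [this, htr]
      simp [Finset.sum_const]
    rw [hsum2] at hsum
    have hreal : (0:ℝ) ≤ 1 - (d:ℝ) * (p * ((d:ℝ) / ((d:ℝ)^2 - 1))) := by
      have : ((1 - (d:ℝ) * (p * ((d:ℝ) / ((d:ℝ)^2 - 1))) : ℝ) : ℂ)
          = 1 - (d:ℂ) * ((p:ℂ) * ((d:ℂ) / ((d:ℂ)^2 - 1))) := by push_cast; ring
      rw [← this] at hsum
      exact_mod_cast hsum
    have h2 : (d:ℝ) * (p * (d:ℝ)) ≤ (d:ℝ)^2 - 1 := by
      have hdiv : (d:ℝ) * (p * ((d:ℝ) / ((d:ℝ)^2 - 1))) = ((d:ℝ) * (p * (d:ℝ))) / ((d:ℝ)^2 - 1) := by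
        ring
      rw [hdiv] at hreal
      have h3 := (div_le_one hden).mp (sub_nonneg.mp hreal)
      linarith
    have heq : 1 - 1/(d:ℝ)^2 = ((d:ℝ)^2 - 1) / (d:ℝ)^2 := by field_simp
    rw [heq, le_div_iff₀ (by positivity)]
    nlinarith
  · intro hple
    have hdRne : (d:ℝ) ≠ 0 := by linarith
    set r₁ : ℝ := 1/(d:ℝ) - p * ((d:ℝ)/((d:ℝ)^2-1)) with hr₁def
    set r₂ : ℝ := p * ((d:ℝ)/((d:ℝ)^2-1)) / (d:ℝ) with hr₂def
    have hk : (0:ℝ) ≤ (d:ℝ)/((d:ℝ)^2-1) := by positivity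
    have hr₁ : 0 ≤ r₁ := by
      have h1 := mul_le_mul_of_nonneg_right hple hk
      have heq : (1 - 1/(d:ℝ)^2) * ((d:ℝ)/((d:ℝ)^2-1)) = 1/(d:ℝ) := by
        field_simp
      rw [heq] at h1
      simp only [hr₁def]
      linarith
    have hr₂ : 0 ≤ r₂ := by positivity
    refine ⟨(((d:ℝ)⁻¹ : ℝ) : ℂ) • (1 : Matrix (Fin d) (Fin d) ℂ), ?_, ?_, ?_⟩
    · exact psd_real_smul Matrix.PosSemidef.one (by positivity)
    · rw [trace_smul, trace_one]
      push_cast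
      field_simp
      simp [hdCne]
    · have hM : (((((d:ℝ)⁻¹ : ℝ) : ℂ) • (1 : Matrix (Fin d) (Fin d) ℂ)) ⊗ₖ
          (1 : Matrix (Fin d) (Fin d) ℂ) - (p : ℂ) • CUNOT d)
          = ((r₁:ℝ):ℂ) • (1 : Matrix (Fin d × Fin d) (Fin d × Fin d) ℂ)
            + ((r₂:ℝ):ℂ) • PhiMax d := by
        rw [smul_kronecker, one_kronecker_one]
        unfold CUNOT
        rw [smul_sub, smul_sub, smul_smul, smul_smul, smul_smul, sub_sub_eq_add_sub,
          add_sub_right_comm, ← sub_smul]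
        congr 1
        · congr 1
          simp only [hr₁def]
          push_cast
          ring
        · simp only [hr₂def]
          push_cast
          ring
      rw [hM]
      exact (psd_real_smul Matrix.PosSemidef.one hr₁).add
        (psd_real_smul (phiMax_posSemidef d) hr₂)
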